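/- The group homomorphism from the free product ℤ ∗ (ℤ/2ℤ) to GL₃(ℤ) sending the generator of the factor ℤ to B and the generator of the factor ℤ/2ℤ to J is injective with image H; in particular, H has presentation ⟨x, y ∣ y²⟩ and is isomorphic to the free product ℤ ∗ ℤ/2ℤ. -/

import Mathlib

open Matrix

def Bmat : Matrix (Fin 3) (Fin 3) ℤ := !![3, 4, 0; 2, 3, 0; 0, 0, 1]
def Jmat : Matrix (Fin 3) (Fin 3) ℤ := !![0, 0, 1; 0, 1, 0; 1, 0, 0]

def BGL : GL (Fin 3) ℤ :=
  ⟨Bmat, !![3, -4, 0; -2, 3, 0; 0, 0, 1], by decide, by decide⟩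

def JGL : GL (Fin 3) ℤ := ⟨Jmat, Jmat, by decide, by decide⟩

def H : Subgroup (GL (Fin 3) ℤ) := Subgroup.closure {BGL, JGL}

namespace HPresAux

/-- Action of `GL₃(ℤ)` on integer vectors. -/
instance : SMul (GL (Fin 3) ℤ) (Fin 3 → ℤ) :=
  ⟨fun g v => (g : Matrix (Fin 3) (Fin 3) ℤ).mulVec v⟩

lemma smul_def (g : GL (Fin 3) ℤ) (v : Fin 3 → ℤ) :
    g • v = (g : Matrix (Fin 3) (Fin 3) ℤ).mulVec v := rfl

instance : MulAction (GL (Fin 3) ℤ) (Fin 3 → ℤ) where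
  one_smul v := by
    rw [smul_def]
    simp
  mul_smul g h v := by
    rw [smul_def, smul_def, smul_def, Units.val_mul, ← Matrix.mulVec_mulVec]

lemma BGL_smul (v : Fin 3 → ℤ) :
    BGL • v = ![3 * v 0 + 4 * v 1, 2 * v 0 + 3 * v 1, v 2] := by
  funext i
  fin_cases i <;>
    simp [smul_def, BGL, Bmat, Matrix.mulVec, dotProduct, Fin.sum_univ_three] <;> ring

lemma BGLinv_smul (v : Fin 3 → ℤ) :
    BGL⁻¹ • v = ![3 * v 0 - 4 * v 1, -2 * v 0 + 3 * v 1, v 2] := by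
  funext i
  fin_cases i <;>
    simp [smul_def, BGL, Matrix.mulVec, dotProduct, Fin.sum_univ_three] <;> ring

lemma JGL_smul (v : Fin 3 → ℤ) : JGL • v = ![v 2, v 1, v 0] := by
  funext i
  fin_cases i <;>
    simp [smul_def, JGL, Jmat, Matrix.mulVec, dotProduct, Fin.sum_univ_three]

/-- The light cone of the invariant quadratic form `v0² - 2v1² + v2²`. -/
def cone (v : Fin 3 → ℤ) : Prop := v 0 ^ 2 + v 2 ^ 2 = 2 * v 1 ^ 2

def Ssmall : Set (Fin 3 → ℤ) := {v | cone v ∧ 0 < v 1 ∧ v 2 ≠ 0 ∧ v 1 < v 0}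
def Sbig : Set (Fin 3 → ℤ) := {v | cone v ∧ 0 < v 1 ∧ v 2 ≠ 0 ∧ v 0 < -v 1}
def XB : Set (Fin 3 → ℤ) := Ssmall ∪ Sbig
def XJ : Set (Fin 3 → ℤ) := {v | cone v ∧ 0 < v 1 ∧ |v 0| < v 1}

lemma stepB {v : Fin 3 → ℤ} (hc : cone v) (h1 : 0 < v 1) (h2 : v 2 ≠ 0)
    (h0 : -v 1 < v 0) : BGL • v ∈ Ssmall := by
  rw [BGL_smul]
  refine ⟨?_, ?_, ?_, ?_⟩ <;> simp only [cone, Matrix.cons_val_zero, Matrix.cons_val_one,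
    Matrix.head_cons, Matrix.cons_val_two, Matrix.tail_cons]
  · unfold cone at hc; ring_nf; ring_nf at hc; linarith
  · linarith
  · exact h2
  · linarith

lemma stepBinv {v : Fin 3 → ℤ} (hc : cone v) (h1 : 0 < v 1) (h2 : v 2 ≠ 0)
    (h0 : v 0 < v 1) : BGL⁻¹ • v ∈ Sbig := by
  rw [BGLinv_smul]
  refine ⟨?_, ?_, ?_, ?_⟩ <;> simp only [cone, Matrix.cons_val_zero, Matrix.cons_val_one,
    Matrix.head_cons, Matrix.cons_val_two, Matrix.tail_cons]
  · unfold cone at hc; ring_nf; ring_nf at hc; linarith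
  · linarith
  · exact h2
  · linarith

lemma XJ_facts {v : Fin 3 → ℤ} (hv : v ∈ XJ) :
    cone v ∧ 0 < v 1 ∧ v 2 ≠ 0 ∧ -v 1 < v 0 ∧ v 0 < v 1 := by
  obtain ⟨hc, h1, h0⟩ := hv
  rw [abs_lt] at h0
  refine ⟨hc, h1, ?_, h0.1, h0.2⟩
  intro h2
  unfold cone at hc
  rw [h2] at hc
  nlinarith [h0.1, h0.2]

lemma stepJ {v : Fin 3 → ℤ} (hv : v ∈ XB) : JGL • v ∈ XJ := by
  rw [JGL_smul]
  have hc : cone v ∧ 0 < v 1 ∧ v 2 ≠ 0 ∧ v 1 < |v 0| := by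
    rcases hv with ⟨hc, h1, h2, h0⟩ | ⟨hc, h1, h2, h0⟩
    · exact ⟨hc, h1, h2, lt_of_lt_of_le h0 (le_abs_self _)⟩
    · exact ⟨hc, h1, h2, lt_of_lt_of_le (by linarith) (neg_le_abs _)⟩
  obtain ⟨hc, h1, h2, h0⟩ := hc
  refine ⟨?_, ?_, ?_⟩ <;> simp only [XJ, cone, Set.mem_setOf_eq, Matrix.cons_val_zero,
    Matrix.cons_val_one, Matrix.head_cons, Matrix.cons_val_two, Matrix.tail_cons]
  · unfold cone at hc; linarith
  · exact h1
  · rw [abs_lt]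
    unfold cone at hc
    have h0' : v 1 ^ 2 < v 0 ^ 2 := by
      have := abs_nonneg (v 0)
      nlinarith [sq_abs (v 0)]
    constructor <;> nlinarith

lemma Ssmall_subset {v : Fin 3 → ℤ} (hv : v ∈ Ssmall) :
    cone v ∧ 0 < v 1 ∧ v 2 ≠ 0 ∧ -v 1 < v 0 := by
  obtain ⟨hc, h1, h2, h0⟩ := hv
  exact ⟨hc, h1, h2, by linarith⟩

lemma Sbig_subset {v : Fin 3 → ℤ} (hv : v ∈ Sbig) :
    cone v ∧ 0 < v 1 ∧ v 2 ≠ 0 ∧ v 0 < v 1 := by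
  obtain ⟨hc, h1, h2, h0⟩ := hv
  exact ⟨hc, h1, h2, by linarith⟩

lemma Bpow_pos (n : ℕ) {v : Fin 3 → ℤ} (hv : v ∈ XJ) : (BGL ^ (n + 1)) • v ∈ Ssmall := by
  induction n with
  | zero =>
    obtain ⟨hc, h1, h2, hl, hr⟩ := XJ_facts hv
    rw [pow_one]
    exact stepB hc h1 h2 hl
  | succ n ih =>
    have : BGL ^ (n + 2) = BGL * BGL ^ (n + 1) := by rw [← pow_succ']
    rw [this, mul_smul]
    obtain ⟨hc, h1, h2, h0⟩ := Ssmall_subset ih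
    exact stepB hc h1 h2 (by obtain ⟨-, -, -, h⟩ := ih; linarith)

lemma Bpow_neg (n : ℕ) {v : Fin 3 → ℤ} (hv : v ∈ XJ) : (BGL⁻¹ ^ (n + 1)) • v ∈ Sbig := by
  induction n with
  | zero =>
    obtain ⟨hc, h1, h2, hl, hr⟩ := XJ_facts hv
    rw [pow_one]
    exact stepBinv hc h1 h2 hr
  | succ n ih =>
    have : BGL⁻¹ ^ (n + 2) = BGL⁻¹ * BGL⁻¹ ^ (n + 1) := by rw [← pow_succ']
    rw [this, mul_smul]
    obtain ⟨hc, h1, h2, h0⟩ := Sbig_subset ih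
    exact stepBinv hc h1 h2 h0

lemma Bzpow {n : ℤ} (hn : n ≠ 0) {v : Fin 3 → ℤ} (hv : v ∈ XJ) : (BGL ^ n) • v ∈ XB := by
  rcases lt_trichotomy n 0 with h | h | h
  · obtain ⟨m, hm⟩ : ∃ m : ℕ, n = -((m : ℤ) + 1) := ⟨(-n - 1).toNat, by omega⟩
    rw [hm]
    have : BGL ^ (-((m : ℤ) + 1)) = BGL⁻¹ ^ (m + 1) := by
      rw [_root_.zpow_neg, show ((m : ℤ) + 1) = ((m + 1 : ℕ) : ℤ) by push_cast; ring,
        zpow_natCast, ← inv_pow]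
    rw [this]
    exact Or.inr (Bpow_neg m hv)
  · exact absurd h hn
  · obtain ⟨m, hm⟩ : ∃ m : ℕ, n = (m : ℤ) + 1 := ⟨(n - 1).toNat, by omega⟩
    rw [hm]
    have : BGL ^ ((m : ℤ) + 1) = BGL ^ (m + 1) := by
      rw [← zpow_natCast]
      push_cast
      ring_nf
    rw [this]
    exact Or.inl (Bpow_pos m hv)

lemma XB_nonempty : XB.Nonempty := by
  refine ⟨![7, 5, 1], Or.inl ⟨?_, ?_, ?_, ?_⟩⟩ <;> norm_num [cone, Matrix.cons_val_two, Matrix.tail_cons, Matrix.head_cons]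

lemma XJ_nonempty : XJ.Nonempty := by
  refine ⟨![1, 5, 7], ⟨?_, ?_, ?_⟩⟩ <;> norm_num [cone, Matrix.cons_val_two, Matrix.tail_cons, Matrix.head_cons]

lemma XB_XJ_disjoint : Disjoint XB XJ := by
  rw [Set.disjoint_left]
  rintro v (⟨-, -, -, h0⟩ | ⟨-, -, -, h0⟩) ⟨-, -, h0'⟩ <;> rw [abs_lt] at h0' <;>
    [linarith [h0'.2]; linarith [h0'.1]]

/-! The free-product machinery. -/

lemma JGL_sq : JGL * JGL = 1 := by
  apply Units.ext
  show Jmat * Jmat = 1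
  decide

lemma Jpow_mod (n : ℕ) : JGL ^ n = JGL ^ (n % 2) := by
  conv_lhs => rw [← Nat.div_add_mod n 2]
  rw [pow_add, pow_mul, pow_two, JGL_sq, one_pow, one_mul]

def jhom : Multiplicative (ZMod 2) →* GL (Fin 3) ℤ where
  toFun x := JGL ^ (x.toAdd.val)
  map_one' := by
    show JGL ^ ((0 : ZMod 2).val) = 1
    rw [ZMod.val_zero, pow_zero]
  map_mul' x y := by
    show JGL ^ ((x.toAdd + y.toAdd).val) = JGL ^ (x.toAdd.val) * JGL ^ (y.toAdd.val)
    rw [ZMod.val_add, ← Jpow_mod, pow_add]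

def Hfam : Bool → Type := fun b => cond b (Multiplicative (ZMod 2)) (Multiplicative ℤ)

instance : (b : Bool) → Group (Hfam b)
  | false => inferInstanceAs (Group (Multiplicative ℤ))
  | true => inferInstanceAs (Group (Multiplicative (ZMod 2)))

def ffam : (b : Bool) → Hfam b →* GL (Fin 3) ℤ
  | false => zpowersHom _ BGL
  | true => jhom

def Xfam : Bool → Set (Fin 3 → ℤ) := fun b => cond b XJ XB

lemma ffam_pingpong : Function.Injective (Monoid.CoprodI.lift ffam) := by
  apply Monoid.CoprodI.lift_injective_of_ping_pong ffam ?_ Xfam ?_ ?_ ?_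
  · refine Or.inr ⟨false, ?_⟩
    refine le_trans (le_of_lt (Cardinal.nat_lt_aleph0 3)) ?_
    exact Cardinal.aleph0_le_mk (Multiplicative ℤ)
  · rintro (_ | _)
    · exact XB_nonempty
    · exact XJ_nonempty
  · rintro (_ | _) (_ | _) hij <;> simp only [ne_eq, not_true] at hij <;>
      simp only [Function.onFun, Xfam, cond] <;>
      [skip; skip] <;> first
        | exact XB_XJ_disjoint
        | exact XB_XJ_disjoint.symm
  · rintro (_ | _) (_ | _) hij h hne <;> simp only [ne_eq, not_true] at hij
    · -- i = false, j = true : B-powers map XJ into XB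
      change Multiplicative ℤ at h
      rintro x ⟨v, hv, rfl⟩
      show (ffam false h) • v ∈ Xfam false
      have hz : h.toAdd ≠ 0 := fun hz => hne (by
        have : h = Multiplicative.ofAdd (0 : ℤ) := by
          apply_fun Multiplicative.toAdd
          simpa using hz
        exact this)
      exact Bzpow hz hv
    · -- i = true, j = false : J maps XB into XJ
      change Multiplicative (ZMod 2) at h
      rintro x ⟨v, hv, rfl⟩
      show (ffam true h) • v ∈ Xfam true
      have hall : ∀ a : ZMod 2, a = 0 ∨ a = 1 := by decide
      have h1 : h.toAdd = 1 := by
        rcases hall h.toAdd with ha | ha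
        · exact absurd (Multiplicative.toAdd.injective (by rw [ha]; rfl)) hne
        · exact ha
      show (jhom h) • v ∈ XJ
      have : jhom h = JGL := by
        show JGL ^ (h.toAdd.val) = JGL
        rw [h1]
        norm_num [ZMod.val_one]
      rw [this]
      exact stepJ hv

def theta : Monoid.Coprod (Multiplicative ℤ) (Multiplicative (ZMod 2)) →* Monoid.CoprodI Hfam :=
  Monoid.Coprod.lift (Monoid.CoprodI.of (M := Hfam) (i := false))
    (Monoid.CoprodI.of (M := Hfam) (i := true))

def rho : Monoid.CoprodI Hfam →* Monoid.Coprod (Multiplicative ℤ) (Multiplicative (ZMod 2)) :=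
  Monoid.CoprodI.lift fun b => match b with
    | false => Monoid.Coprod.inl
    | true => Monoid.Coprod.inr

lemma lift_ffam_inl (x : Multiplicative ℤ) :
    ((Monoid.CoprodI.lift ffam).comp theta) (Monoid.Coprod.inl x) = BGL ^ x.toAdd := by
  show Monoid.CoprodI.lift ffam (theta (Monoid.Coprod.inl x)) = _
  rw [theta]; erw [Monoid.Coprod.lift_apply_inl (Monoid.CoprodI.of (M := Hfam) (i := false)) (Monoid.CoprodI.of (M := Hfam) (i := true)) x]
  exact Monoid.CoprodI.lift_of (M := Hfam) ffam (i := false) x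

lemma lift_ffam_inr (x : Multiplicative (ZMod 2)) :
    ((Monoid.CoprodI.lift ffam).comp theta) (Monoid.Coprod.inr x) = JGL ^ x.toAdd.val := by
  show Monoid.CoprodI.lift ffam (theta (Monoid.Coprod.inr x)) = _
  rw [theta]; erw [Monoid.Coprod.lift_apply_inr (Monoid.CoprodI.of (M := Hfam) (i := false)) (Monoid.CoprodI.of (M := Hfam) (i := true)) x]
  exact Monoid.CoprodI.lift_of (M := Hfam) ffam (i := true) x

lemma rho_theta : rho.comp theta = MonoidHom.id _ := by
  apply Monoid.Coprod.hom_ext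
  · refine MonoidHom.ext fun x => ?_
    show rho (theta (Monoid.Coprod.inl x)) = Monoid.Coprod.inl x
    rw [theta]; erw [Monoid.Coprod.lift_apply_inl (Monoid.CoprodI.of (M := Hfam) (i := false)) (Monoid.CoprodI.of (M := Hfam) (i := true)) x]
    exact Monoid.CoprodI.lift_of (M := Hfam) _ (i := false) x
  · refine MonoidHom.ext fun x => ?_
    show rho (theta (Monoid.Coprod.inr x)) = Monoid.Coprod.inr x
    rw [theta]; erw [Monoid.Coprod.lift_apply_inr (Monoid.CoprodI.of (M := Hfam) (i := false)) (Monoid.CoprodI.of (M := Hfam) (i := true)) x]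
    exact Monoid.CoprodI.lift_of (M := Hfam) _ (i := true) x

lemma theta_injective : Function.Injective theta := by
  have h : Function.LeftInverse rho theta := fun x => by
    have := DFunLike.congr_fun rho_theta x
    simpa using this
  exact h.injective

end HPresAux

open HPresAux in
/-- The homomorphism `ℤ ∗ ℤ/2ℤ →* GL₃(ℤ)` sending the generator of `ℤ` to `B`
and the generator of `ℤ/2ℤ` to `J` is injective with image `H`; in particular
`H` has presentation `⟨x, y ∣ y²⟩` and is isomorphic to `ℤ ∗ ℤ/2ℤ`. -/
theorem H_presentation :
    ∃ φ : Monoid.Coprod (Multiplicative ℤ) (Multiplicative (ZMod 2)) →* GL (Fin 3) ℤ,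
      φ (Monoid.Coprod.inl (Multiplicative.ofAdd (1 : ℤ))) = BGL ∧
      φ (Monoid.Coprod.inr (Multiplicative.ofAdd (1 : ZMod 2))) = JGL ∧
      Function.Injective φ ∧ φ.range = H := by
  refine ⟨(Monoid.CoprodI.lift ffam).comp theta, ?_, ?_, ?_, ?_⟩
  · rw [lift_ffam_inl]
    simp
  · rw [lift_ffam_inr]
    norm_num [ZMod.val_one]
  · exact ffam_pingpong.comp theta_injective
  · apply le_antisymm
    · rintro x ⟨y, rfl⟩
      set φ := (Monoid.CoprodI.lift ffam).comp theta with hφ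
      induction y using Monoid.Coprod.induction_on with
      | inl m =>
        rw [hφ, lift_ffam_inl]
        exact Subgroup.zpow_mem _ (Subgroup.subset_closure (by simp)) _
      | inr n =>
        rw [hφ, lift_ffam_inr]
        exact Subgroup.pow_mem _ (Subgroup.subset_closure (by simp)) _
      | mul x y hx hy =>
        rw [_root_.map_mul]
        exact Subgroup.mul_mem _ hx hy
    · rw [H]
      apply (Subgroup.closure_le _).mpr
      rintro x (rfl | rfl)
      · exact ⟨Monoid.Coprod.inl (Multiplicative.ofAdd (1 : ℤ)), by
          rw [lift_ffam_inl]; simp⟩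
      · exact ⟨Monoid.Coprod.inr (Multiplicative.ofAdd (1 : ZMod 2)), by
          rw [lift_ffam_inr]; norm_num [ZMod.val_one]⟩
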